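/- Let (Ω, ℙ) be a probability space and X₁,…,X_m : Ω → ℝ (m ≥ 1) integrable random variables with means μₗ = E[Xₗ], standard deviations σₗ > 0 with E[(Xₗ − μₗ)²] = σₗ², and let λₗ be the skewness parameter of Xₗ. Let Z : ℝ^m → ℝ be affine, Z(x) = b + Σₗ aₗ·xₗ. Then the two-point estimate of the mean, Σ_{l=1}^{m} Σ_{k=1}^{2} w_{l,k} · Z(μ₁, …, μ_{l−1}, P_{l,k}, μ_{l+1}, …, μ_m), equals the exact expectation E[Z(X₁,…,X_m)] = b + Σₗ aₗ·μₗ. -/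

import Mathlib

open MeasureTheory

/-- Hong's two-point estimate of the mean of an affine function
`Z(x) = b + Σₗ aₗ·xₗ` of `m ≥ 1` integrable random variables equals the exact
expectation `E[Z(X₁,…,X_m)] = b + Σₗ aₗ·μₗ`. -/
theorem tpe_mean_exact_for_affine
    {Ω : Type*} [MeasurableSpace Ω] (P : Measure Ω) [IsProbabilityMeasure P]
    (m : ℕ) (hm : 1 ≤ m) (X : Fin m → Ω → ℝ) (μ σ lam : Fin m → ℝ)
    (hint : ∀ l, Integrable (X l) P)
    (hmean : ∀ l, ∫ ω, X l ω ∂P = μ l)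
    (hσ : ∀ l, 0 < σ l)
    (hvar : ∀ l, ∫ ω, (X l ω - μ l) ^ 2 ∂P = (σ l) ^ 2)
    (hskew : ∀ l, ∫ ω, ((X l ω - μ l) / σ l) ^ 3 ∂P = lam l)
    (ξ w Pt : Fin m → Fin 2 → ℝ)
    (hξ₁ : ∀ l, ξ l 0 = lam l / 2 + Real.sqrt ((m : ℝ) + (lam l / 2) ^ 2))
    (hξ₂ : ∀ l, ξ l 1 = lam l / 2 - Real.sqrt ((m : ℝ) + (lam l / 2) ^ 2))
    (hw₁ : ∀ l, w l 0 = -(1 / (m : ℝ)) * ξ l 1 / (ξ l 0 - ξ l 1))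
    (hw₂ : ∀ l, w l 1 = (1 / (m : ℝ)) * ξ l 0 / (ξ l 0 - ξ l 1))
    (hPt : ∀ l k, Pt l k = μ l + ξ l k * σ l)
    (Z : (Fin m → ℝ) → ℝ) (b : ℝ) (a : Fin m → ℝ)
    (hZ : ∀ x, Z x = b + ∑ l, a l * x l) :
    (∑ l, ∑ k, w l k * Z (Function.update μ l (Pt l k))) =
        ∫ ω, Z (fun l => X l ω) ∂P ∧
      (∫ ω, Z (fun l => X l ω) ∂P) = b + ∑ l, a l * μ l := by
  have hm1 : (1 : ℝ) ≤ (m : ℝ) := by exact_mod_cast hm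
  have hmne : (m : ℝ) ≠ 0 := by linarith
  -- exact expectation
  have h2 : (∫ ω, Z (fun l => X l ω) ∂P) = b + ∑ l, a l * μ l := by
    simp only [hZ]
    rw [integral_add (integrable_const b)
      (integrable_finset_sum _ (fun l _ => (hint l).const_mul (a l)))]
    rw [integral_const, integral_finset_sum _ (fun l _ => (hint l).const_mul (a l))]
    simp only [measure_univ, probReal_univ, ENNReal.toReal_one, smul_eq_mul, one_mul]
    congr 1
    refine Finset.sum_congr rfl fun l _ => ?_
    rw [integral_const_mul, hmean l]
  -- value of Z at an updated point
  have hZu : ∀ (l : Fin m) (x : ℝ),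
      Z (Function.update μ l x) = (b + ∑ j, a j * μ j) + a l * (x - μ l) := by
    intro l x
    rw [hZ]
    have hfun : (fun j => a j * Function.update μ l x j)
        = Function.update (fun j => a j * μ j) l (a l * x) := by
      funext j
      by_cases h : j = l
      · subst h; simp
      · simp [Function.update_of_ne h]
    rw [hfun, Finset.sum_update_of_mem (Finset.mem_univ l)]
    rw [Finset.sum_sdiff_eq_sub (Finset.subset_univ {l}), Finset.sum_singleton]
    ring
  have key : ∀ l : Fin m,
      w l 0 * Z (Function.update μ l (Pt l 0)) + w l 1 * Z (Function.update μ l (Pt l 1))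
        = (1 / (m : ℝ)) * (b + ∑ j, a j * μ j) := by
    intro l
    have hs : 0 < Real.sqrt ((m : ℝ) + (lam l / 2) ^ 2) :=
      Real.sqrt_pos.mpr (by nlinarith [sq_nonneg (lam l / 2)])
    have hd : ξ l 0 - ξ l 1 = 2 * Real.sqrt ((m : ℝ) + (lam l / 2) ^ 2) := by
      rw [hξ₁, hξ₂]; ring
    rw [hZu l _, hZu l _, hPt, hPt, hw₁, hw₂, hd, hξ₁, hξ₂]
    have hsne : Real.sqrt ((m : ℝ) + (lam l / 2) ^ 2) ≠ 0 := ne_of_gt hs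
    field_simp
    ring
  have h1 : (∑ l, ∑ k, w l k * Z (Function.update μ l (Pt l k)))
      = b + ∑ l, a l * μ l := by
    have : (∑ l : Fin m, ∑ k, w l k * Z (Function.update μ l (Pt l k)))
        = ∑ l : Fin m, (1 / (m : ℝ)) * (b + ∑ j, a j * μ j) := by
      refine Finset.sum_congr rfl fun l _ => ?_
      rw [Fin.sum_univ_two, key l]
    rw [this, Finset.sum_const, Finset.card_univ, Fintype.card_fin, nsmul_eq_mul]
    field_simp
  exact ⟨h1.trans h2.symm, h2⟩
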